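/- Let k ≥ 1 be an integer and ν > 0. There exist constants A₁, A₂ > 0 (depending on ν, k) such that for all n ≥ 1 and all x ≥ 0, ((1+x^{2k})/x) · e^{−ν x^k} · xⁿ/Γ(n/k) ≤ A₁ · A₂ⁿ, uniformly in x > 0. -/

import Mathlib

open Real

/-- Uniform lower bound for the Gamma function on the positive reals. -/
lemma gamma_lower_bound {s : ℝ} (hs : 0 < s) : 1 / 6 ≤ Real.Gamma s := by
  have hmono := Real.Gamma_strictMonoOn_Ici.monotoneOn
  rcases le_or_gt 2 s with h2 | h2
  · have : Real.Gamma 2 ≤ Real.Gamma s :=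
      hmono (by norm_num) (Set.mem_Ici.2 h2) h2
    rw [Real.Gamma_two] at this
    linarith
  · have hG2 : Real.Gamma 2 ≤ Real.Gamma (s + 2) :=
      hmono (by norm_num) (Set.mem_Ici.2 (by linarith)) (by linarith)
    rw [Real.Gamma_two] at hG2
    have he : Real.Gamma (s + 2) = (s + 1) * s * Real.Gamma s := by
      rw [show s + 2 = (s + 1) + 1 by ring,
        Real.Gamma_add_one (by positivity : s + 1 ≠ 0),
        Real.Gamma_add_one hs.ne']
      ring
    have hGpos : 0 < Real.Gamma s := Real.Gamma_pos_of_pos hs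
    have hlt : (s + 1) * s < 6 := by nlinarith
    rw [he] at hG2
    rw [div_le_iff₀ (by norm_num : (0:ℝ) < 6)]
    nlinarith

set_option maxHeartbeats 1600000 in
theorem borel_growth_estimate (k : ℕ) (hk : 1 ≤ k) (ν : ℝ) (hν : 0 < ν) :
    ∃ A₁ A₂ : ℝ, 0 < A₁ ∧ 0 < A₂ ∧ ∀ n : ℕ, 1 ≤ n → ∀ x : ℝ, 0 < x →
      (1 + x ^ (2 * k)) / x * Real.exp (-ν * x ^ k) * x ^ n /
          Real.Gamma ((n : ℝ) / k)
        ≤ A₁ * A₂ ^ n := by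
  set M : ℝ := max 1 ν⁻¹ with hM
  have hM1 : 1 ≤ M := le_max_left _ _
  have hMν : ν⁻¹ ≤ M := le_max_right _ _
  clear_value M
  have hM0 : 0 < M := lt_of_lt_of_le one_pos hM1
  refine ⟨8192 * M ^ 3 + 12, 16 * M, by positivity, by positivity, ?_⟩
  intro n hn x hx
  set s : ℝ := (n : ℝ) / k with hsdef
  have hk0 : 0 < k := hk
  have hkR : (0:ℝ) < (k:ℝ) := by exact_mod_cast hk0
  have hs : 0 < s := by rw [hsdef]; positivity
  clear_value s
  have hGpos : 0 < Real.Gamma s := Real.Gamma_pos_of_pos hs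
  have hG : 1 / 6 ≤ Real.Gamma s := gamma_lower_bound hs
  have hA2one : (1:ℝ) ≤ (16 * M) ^ n := one_le_pow₀ (by linarith)
  obtain ⟨m, hm⟩ : ∃ m, n = m + 1 := ⟨n - 1, (Nat.succ_pred_eq_of_pos hn).symm⟩
  have hE : (1 + x ^ (2 * k)) / x * Real.exp (-ν * x ^ k) * x ^ n /
      Real.Gamma s
      = (1 + x ^ (2 * k)) * x ^ m * Real.exp (-(ν * x ^ k)) / Real.Gamma s := by
    rw [hm, neg_mul]
    field_simp
    ring
  rw [hE]
  rcases le_or_gt x 1 with hx1 | hx1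
  · -- small x: numerator ≤ 2
    have h1 : x ^ (2 * k) ≤ 1 := pow_le_one₀ hx.le hx1
    have h2 : x ^ m ≤ 1 := pow_le_one₀ hx.le hx1
    have h3 : Real.exp (-(ν * x ^ k)) ≤ 1 := by
      rw [Real.exp_le_one_iff]
      have : 0 < x ^ k := pow_pos hx k
      nlinarith
    have hnum : (1 + x ^ (2 * k)) * x ^ m * Real.exp (-(ν * x ^ k)) ≤ 2 := by
      have hp2 : 0 ≤ x ^ m := by positivity
      have hp3 : 0 < Real.exp (-(ν * x ^ k)) := Real.exp_pos _
      have hbc : x ^ m * Real.exp (-(ν * x ^ k)) ≤ 1 :=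
        mul_le_one₀ h2 hp3.le h3
      have hbc0 : 0 ≤ x ^ m * Real.exp (-(ν * x ^ k)) := by positivity
      calc (1 + x ^ (2 * k)) * x ^ m * Real.exp (-(ν * x ^ k))
          = (1 + x ^ (2 * k)) * (x ^ m * Real.exp (-(ν * x ^ k))) := by ring
        _ ≤ 2 * 1 := mul_le_mul (by linarith) hbc hbc0 (by norm_num)
        _ = 2 := by norm_num
    have : (1 + x ^ (2 * k)) * x ^ m * Real.exp (-(ν * x ^ k)) / Real.Gamma s
        ≤ 12 := by
      rw [div_le_iff₀ hGpos]
      nlinarith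
    calc _ ≤ (12:ℝ) := this
      _ ≤ (8192 * M ^ 3 + 12) * 1 := by nlinarith [pow_pos hM0 3]
      _ ≤ (8192 * M ^ 3 + 12) * (16 * M) ^ n := by
          apply mul_le_mul_of_nonneg_left hA2one (by positivity)
  · -- large x
    set j : ℕ := n / k + 3 with hj
    clear_value j
    have hjk : n + 2 * k - 1 ≤ j * k := by
      have h1 := Nat.div_add_mod n k
      have h2 := Nat.mod_lt n hk0
      have h3 : j * k = k * (n / k) + 3 * k := by rw [hj]; ring
      omega
    have hjn : j ≤ n + 3 := by
      have := Nat.div_le_self n k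
      omega
    -- numerator bound step 1 : (1+x^{2k}) x^m ≤ 2 x^{jk}
    have hb1 : (1 + x ^ (2 * k)) * x ^ m ≤ 2 * x ^ (j * k) := by
      have e1 : (1 + x ^ (2 * k)) * x ^ m = x ^ m + x ^ (m + 2 * k) := by
        rw [pow_add]; ring
      have l1 : x ^ m ≤ x ^ (j * k) :=
        pow_le_pow_right₀ hx1.le (by omega)
      have l2 : x ^ (m + 2 * k) ≤ x ^ (j * k) :=
        pow_le_pow_right₀ hx1.le (by omega)
      rw [e1]; linarith
    -- step 2 : x^{jk} e^{-νx^k} ≤ j!/ν^j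
    have hb2 : x ^ (j * k) * Real.exp (-(ν * x ^ k)) ≤ (j.factorial : ℝ) / ν ^ j := by
      have h1 : (ν * x ^ k) ^ j / (j.factorial : ℝ) ≤ Real.exp (ν * x ^ k) :=
        Real.pow_div_factorial_le_exp (x := ν * x ^ k) (by positivity) j
      have hfac : (0:ℝ) < (j.factorial : ℝ) := by exact_mod_cast j.factorial_pos
      have key : x ^ (j * k) * ν ^ j ≤ (j.factorial : ℝ) * Real.exp (ν * x ^ k) := by
        rw [div_le_iff₀ hfac] at h1
        calc x ^ (j * k) * ν ^ j = (ν * x ^ k) ^ j := by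
              rw [mul_pow, ← pow_mul]; ring
          _ ≤ Real.exp (ν * x ^ k) * (j.factorial : ℝ) := h1
          _ = (j.factorial : ℝ) * Real.exp (ν * x ^ k) := mul_comm _ _
      rw [Real.exp_neg, mul_inv_le_iff₀ (Real.exp_pos _), div_mul_eq_mul_div,
        le_div_iff₀ (pow_pos hν j)]
      linarith [key]
    -- step 3 : j! ≤ (n+3)^4 Γ s
    have hb3 : (j.factorial : ℝ) ≤ ((n : ℝ) + 3) ^ 4 * Real.Gamma s := by
      have hsn : s ≤ (n : ℝ) := by
        rw [hsdef, div_le_iff₀ hkR]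
        have : (1:ℝ) ≤ (k:ℝ) := by exact_mod_cast hk
        nlinarith [Nat.cast_nonneg (α := ℝ) n]
      have hjle : (j : ℝ) + 1 ≤ s + 4 := by
        have h1 : ((n / k : ℕ) : ℝ) ≤ (n : ℝ) / (k : ℝ) := Nat.cast_div_le
        have : (j : ℝ) = ((n / k : ℕ) : ℝ) + 3 := by rw [hj]; push_cast; ring
        rw [this, hsdef]; linarith
      have hfac : (j.factorial : ℝ) = Real.Gamma ((j : ℝ) + 1) :=
        (Real.Gamma_nat_eq_factorial j).symm
      have hmem1 : (j : ℝ) + 1 ∈ Set.Ici (2:ℝ) := by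
        have h3j : 3 ≤ j := by rw [hj]; exact Nat.le_add_left 3 _
        have : (3:ℝ) ≤ (j : ℝ) := by exact_mod_cast h3j
        simp only [Set.mem_Ici]; linarith
      have hmono : Real.Gamma ((j:ℝ)+1) ≤ Real.Gamma (s + 4) :=
        Real.Gamma_strictMonoOn_Ici.monotoneOn hmem1
          (Set.mem_Ici.2 (by linarith)) hjle
      have e4 : Real.Gamma (s + 4) = (s+3)*(s+2)*(s+1)*s * Real.Gamma s := by
        rw [show s + 4 = (s+3)+1 by ring,
          Real.Gamma_add_one (by positivity : s + 3 ≠ 0),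
          show s + 3 = (s+2)+1 by ring,
          Real.Gamma_add_one (by positivity : s + 2 ≠ 0),
          show s + 2 = (s+1)+1 by ring,
          Real.Gamma_add_one (by positivity : s + 1 ≠ 0),
          Real.Gamma_add_one hs.ne']
        ring
      have hprod : (s+3)*(s+2)*(s+1)*s ≤ ((n:ℝ)+3)^4 := by
        have h0 : (0:ℝ) ≤ (n:ℝ) := Nat.cast_nonneg n
        have f1 : s + 3 ≤ (n:ℝ) + 3 := by linarith
        have f2 : s + 2 ≤ (n:ℝ) + 3 := by linarith
        have f3 : s + 1 ≤ (n:ℝ) + 3 := by linarith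
        have f4 : s ≤ (n:ℝ) + 3 := by linarith
        have p2 : (s+3)*(s+2) ≤ ((n:ℝ)+3)*((n:ℝ)+3) :=
          mul_le_mul f1 f2 (by linarith) (by linarith)
        have p3 : (s+3)*(s+2)*(s+1) ≤ ((n:ℝ)+3)*((n:ℝ)+3)*((n:ℝ)+3) :=
          mul_le_mul p2 f3 (by nlinarith) (by nlinarith)
        have p4 : (s+3)*(s+2)*(s+1)*s ≤ ((n:ℝ)+3)*((n:ℝ)+3)*((n:ℝ)+3)*((n:ℝ)+3) :=
          mul_le_mul p3 f4 hs.le (by nlinarith)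
        calc (s+3)*(s+2)*(s+1)*s
            ≤ ((n:ℝ)+3)*((n:ℝ)+3)*((n:ℝ)+3)*((n:ℝ)+3) := p4
          _ = ((n:ℝ)+3)^4 := by ring
      calc (j.factorial : ℝ) = Real.Gamma ((j:ℝ)+1) := hfac
        _ ≤ Real.Gamma (s + 4) := hmono
        _ = (s+3)*(s+2)*(s+1)*s * Real.Gamma s := e4
        _ ≤ ((n:ℝ)+3)^4 * Real.Gamma s :=
            mul_le_mul_of_nonneg_right hprod hGpos.le
    -- step 4 : ν^{-j} ≤ M^{n+3}
    have hb4 : (ν ^ j)⁻¹ ≤ M ^ (n + 3) := by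
      rw [← inv_pow]
      calc ν⁻¹ ^ j ≤ M ^ j := pow_le_pow_left₀ (by positivity) hMν j
        _ ≤ M ^ (n + 3) := pow_le_pow_right₀ hM1 hjn
    -- step 5 : (n+3)^4 ≤ 4096 * 16^n
    have hb5 : ((n:ℝ)+3)^4 ≤ 4096 * 16 ^ n := by
      have h1 : (n:ℝ) + 3 ≤ 2 ^ (n + 3) := by
        have := Nat.lt_two_pow_self (n := n + 3)
        have h2 : ((n + 3 : ℕ) : ℝ) ≤ ((2 ^ (n + 3) : ℕ) : ℝ) := by
          exact_mod_cast this.le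
        push_cast at h2
        linarith
      calc ((n:ℝ)+3)^4 ≤ (2 ^ (n+3) : ℝ)^4 := by
            apply pow_le_pow_left₀ (by positivity) h1
        _ = 4096 * 16 ^ n := by
            rw [← pow_mul, show (n+3)*4 = 12 + 4*n by ring, pow_add, pow_mul]
            norm_num
    -- combine
    have hnum : (1 + x ^ (2 * k)) * x ^ m * Real.exp (-(ν * x ^ k))
        ≤ 2 * ((j.factorial : ℝ) / ν ^ j) := by
      have hep : 0 < Real.exp (-(ν * x ^ k)) := Real.exp_pos _
      have hxp : 0 ≤ x ^ (j * k) := by positivity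
      calc (1 + x ^ (2 * k)) * x ^ m * Real.exp (-(ν * x ^ k))
          ≤ 2 * x ^ (j * k) * Real.exp (-(ν * x ^ k)) :=
            mul_le_mul_of_nonneg_right hb1 hep.le
        _ = 2 * (x ^ (j * k) * Real.exp (-(ν * x ^ k))) := by ring
        _ ≤ 2 * ((j.factorial : ℝ) / ν ^ j) := by linarith [hb2]
    have hfinal : (1 + x ^ (2 * k)) * x ^ m * Real.exp (-(ν * x ^ k)) /
        Real.Gamma s ≤ 2 * ((n:ℝ)+3)^4 * M ^ (n+3) := by
      rw [div_le_iff₀ hGpos]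
      have h1 : 2 * ((j.factorial : ℝ) / ν ^ j) ≤ 2 * (((n:ℝ)+3)^4 * Real.Gamma s * M ^ (n+3)) := by
        have : (j.factorial : ℝ) / ν ^ j = (j.factorial : ℝ) * (ν ^ j)⁻¹ := div_eq_mul_inv _ _
        rw [this]
        have hja : (0:ℝ) ≤ (j.factorial : ℝ) := by positivity
        have := mul_le_mul hb3 hb4 (by positivity) (by positivity)
        linarith
      calc (1 + x ^ (2 * k)) * x ^ m * Real.exp (-(ν * x ^ k))
          ≤ 2 * ((j.factorial : ℝ) / ν ^ j) := hnum
        _ ≤ 2 * (((n:ℝ)+3)^4 * Real.Gamma s * M ^ (n+3)) := h1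
        _ = 2 * ((n:ℝ)+3)^4 * M ^ (n+3) * Real.Gamma s := by ring
    calc (1 + x ^ (2 * k)) * x ^ m * Real.exp (-(ν * x ^ k)) / Real.Gamma s
        ≤ 2 * ((n:ℝ)+3)^4 * M ^ (n+3) := hfinal
      _ ≤ 2 * (4096 * 16 ^ n) * M ^ (n+3) := by
          have : (0:ℝ) < M ^ (n+3) := by positivity
          nlinarith [hb5]
      _ = 8192 * M ^ 3 * (16 ^ n * M ^ n) := by
          rw [pow_add]; ring
      _ = 8192 * M ^ 3 * (16 * M) ^ n := by rw [mul_pow]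
      _ ≤ (8192 * M ^ 3 + 12) * (16 * M) ^ n := by
          have : (0:ℝ) < (16 * M) ^ n := by positivity
          nlinarith
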